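/- Let G be a cofinitary group, r ∈ 2^ω, and (s,E) a condition of Z†_G(r). Then every condition (t,E) of Z_G with (t,E) ≤ (s,E) is itself a condition of Z†_G(r). -/

import Mathlib

noncomputable section

/-- Permutations of the natural numbers (elements of `S_∞`). -/
abbrev Perm' := Equiv.Perm ℕ

/-- A letter of a word over `G ∪ {x, x⁻¹}`: either a group element (of `S_∞`),
or `Sum.inr true` standing for `x`, or `Sum.inr false` standing for `x⁻¹`. -/
abbrev Letter := Perm' ⊕ Bool

/-- A word is a list of letters, written left to right
(the leftmost letter is applied last). -/
abbrev Word := List Letter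

/-- A subgroup of `S_∞` is cofinitary if every non-identity element
has only finitely many fixed points. -/
def Cofinitary (G : Subgroup Perm') : Prop :=
  ∀ g ∈ G, g ≠ 1 → {n : ℕ | g n = n}.Finite

/-- A set of pairs is a partial injection (functional and injective). -/
def PartInj (s : Set (ℕ × ℕ)) : Prop :=
  (∀ ⦃a b c⦄, (a, b) ∈ s → (a, c) ∈ s → b = c) ∧
  (∀ ⦃a b c⦄, (a, c) ∈ s → (b, c) ∈ s → a = b)

/-- Domain of a partial injection given as a set of pairs. -/
def pdom (s : Set (ℕ × ℕ)) : Set ℕ := Prod.fst '' s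

/-- Range of a partial injection given as a set of pairs. -/
def pran (s : Set (ℕ × ℕ)) : Set ℕ := Prod.snd '' s

/-- The relation given by substituting the partial injection `s` for `x`
(and `s⁻¹` for `x⁻¹`) in a single letter. -/
def letterRel (s : Set (ℕ × ℕ)) : Letter → ℕ → ℕ → Prop
  | Sum.inl g => fun a b => g a = b
  | Sum.inr true => fun a b => (a, b) ∈ s
  | Sum.inr false => fun a b => (b, a) ∈ s

/-- The relation `w[s]`: evaluation of a word at the partial injection `s`,
composing the letter relations (rightmost letter applied first). -/
def wordRel (s : Set (ℕ × ℕ)) : Word → ℕ → ℕ → Prop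
  | [] => fun a b => a = b
  | l :: w => fun a b => ∃ c, wordRel s w a c ∧ letterRel s l c b

/-- `fix(w[s])`, the set of fixed points of the partial injection `w[s]`. -/
def wordFix (s : Set (ℕ × ℕ)) (w : Word) : Set ℕ := {n | wordRel s w n n}

/-- The word `x^k` for an integer `k` (for `k < 0`, `|k|` copies of `x⁻¹`). -/
def xpow (k : ℤ) : Word :=
  if 0 ≤ k then List.replicate k.toNat (Sum.inr true : Letter)
  else List.replicate (-k).toNat (Sum.inr false : Letter)

/-- The block `g x^k` as a word. -/
def blockWord (p : Perm' × ℤ) : Word := Sum.inl p.1 :: xpow p.2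

/-- `w` is a nice word (member of `W*_G`): `w = x^{k₀}` with `k₀ > 0`, or
`w = g_l x^{k_l} ⋯ g₁ x^{k₁} g₀ x^{k₀}` with `k₀ > 0`, all `k_i ≠ 0` and all
`g_i ∈ G \ {id}`. -/
def IsNice (G : Subgroup Perm') (w : Word) : Prop :=
  (∃ k : ℕ, 0 < k ∧ w = xpow (k : ℤ)) ∨
  (∃ bs : List (Perm' × ℤ), bs ≠ [] ∧
    (∀ p ∈ bs, p.1 ∈ G ∧ p.1 ≠ 1 ∧ p.2 ≠ 0) ∧
    (∃ p, bs.getLast? = some p ∧ 0 < p.2) ∧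
    w = (bs.map blockWord).flatten)

/-- The number of occurrences of `x` or `x⁻¹` in a word. -/
def xOccurrences (w : Word) : ℕ := w.countP (fun l => l.isRight)

/-- `w ∈ W¹_G`: a nice word with exactly one occurrence of `x` or `x⁻¹`. -/
def IsNiceOne (G : Subgroup Perm') (w : Word) : Prop :=
  IsNice G w ∧ xOccurrences w = 1

/-- `(s, E)` is a condition of Zhang's forcing `Z_G`: `s` is a finite partial
injection and `E` a finite set of nice words. -/
def ZCond (G : Subgroup Perm') (s : Set (ℕ × ℕ)) (E : Set Word) : Prop :=
  s.Finite ∧ PartInj s ∧ E.Finite ∧ ∀ w ∈ E, IsNice G w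

/-- `(t, F) ≤ (s, E)` in Zhang's forcing: `s ⊆ t`, `E ⊆ F`, and
`fix(w[t]) = fix(w[s])` for every `w ∈ E`. -/
def ZLe (t : Set (ℕ × ℕ)) (F : Set Word) (s : Set (ℕ × ℕ)) (E : Set Word) : Prop :=
  s ⊆ t ∧ E ⊆ F ∧ ∀ w ∈ E, wordFix t w = wordFix s w

/-- An injective tree: a nonempty set of finite sequences closed under initial
segments, all of whose elements are injective sequences. -/
def IsInjTree (T : Set (List ℕ)) : Prop :=
  T.Nonempty ∧ (∀ t ∈ T, ∀ s : List ℕ, s <+: t → s ∈ T) ∧ ∀ t ∈ T, t.Nodup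

/-- `T ∈ I_i(P)⁺`: an injective tree such that for every `s ∈ T` and every
finite `P₀ ⊆ P` there are `t ∈ T` extending `s` and `k ∈ dom(t) \ dom(s)` with
`t(k) ≠ f(k)` for all `f ∈ P₀`. -/
def TreePos (P : Set Perm') (T : Set (List ℕ)) : Prop :=
  IsInjTree T ∧
  ∀ s ∈ T, ∀ P₀ ⊆ P, P₀.Finite →
    ∃ t ∈ T, s <+: t ∧ ∃ k, s.length ≤ k ∧ k < t.length ∧
      ∀ f ∈ P₀, t.getD k 0 ≠ f k

/-- A set `O` is closed under a relation `R` and its inverse. -/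
def RelClosed (R : ℕ → ℕ → Prop) (O : Set ℕ) : Prop :=
  ∀ a b, R a b → (a ∈ O ↔ b ∈ O)

/-- The orbit of `n` under the (partial injective) relation `R`: the smallest
set containing `n` closed under applications of `R` and `R⁻¹`. -/
def relOrbit (R : ℕ → ℕ → Prop) (n : ℕ) : Set ℕ :=
  ⋂₀ {O : Set ℕ | n ∈ O ∧ RelClosed R O}

/-- The set of all orbits of the relation `R`. -/
def relOrbits (R : ℕ → ℕ → Prop) : Set (Set ℕ) := {O | ∃ n, O = relOrbit R n}

/-- Domain of a relation. -/
def relDom (R : ℕ → ℕ → Prop) : Set ℕ := {a | ∃ b, R a b}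

/-- Range of a relation. -/
def relRan (R : ℕ → ℕ → Prop) : Set ℕ := {b | ∃ a, R a b}

/-- The set of closed orbits of `R`: those orbits contained in `dom ∩ ran`. -/
def relClosedOrbits (R : ℕ → ℕ → Prop) : Set (Set ℕ) :=
  {O ∈ relOrbits R | O ⊆ relDom R ∩ relRan R}

/-- The relation of a partial injection given as a set of pairs. -/
def sRel (s : Set (ℕ × ℕ)) : ℕ → ℕ → Prop := fun a b => (a, b) ∈ s

/-- The relation (graph) of a permutation of `ℕ`. -/
def permRel (f : Perm') : ℕ → ℕ → Prop := fun a b => f a = b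

/-- A partial injection `s` is nice: every closed orbit has its minimum below
the minimum of the complement of the union of all closed orbits. -/
def NiceInj (s : Set (ℕ × ℕ)) : Prop :=
  ∀ O ∈ relClosedOrbits (sRel s),
    sInf O < sInf {n : ℕ | n ∉ ⋃₀ relClosedOrbits (sRel s)}

/-- The position of a closed orbit `O` of `s` in the well-order of closed
orbits by their minima. -/
def orbitIndex (s : Set (ℕ × ℕ)) (O : Set ℕ) : ℕ :=
  {P ∈ relClosedOrbits (sRel s) | sInf P < sInf O}.ncard

/-- `s` codes `r`, i.e. `o_s ⊆ r`: the `n`-th closed orbit (in the well-order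
by minima) has cardinality congruent to `r(n)` mod 2. -/
def CodesReal (s : Set (ℕ × ℕ)) (r : ℕ → Fin 2) : Prop :=
  ∀ O ∈ relClosedOrbits (sRel s), O.ncard % 2 = (r (orbitIndex s O) : ℕ)

/-- `(s, E)` is a condition of `Z_G(r)`. -/
def ZrCond (G : Subgroup Perm') (r : ℕ → Fin 2)
    (s : Set (ℕ × ℕ)) (E : Set Word) : Prop :=
  ZCond G s E ∧ NiceInj s ∧ CodesReal s r

/-- The `n`-th prime. -/
def pPrime (n : ℕ) : ℕ := Nat.nth Nat.Prime n

/-- The orbit-coding function `o†`: `o†(n)` is the number of closed orbits of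
`R` of cardinality `p_n`, modulo 2. -/
def odag (R : ℕ → ℕ → Prop) (n : ℕ) : ℕ :=
  {O ∈ relClosedOrbits R | O.ncard = pPrime n}.ncard % 2

/-- `v^k`: the word `v` concatenated `k` times. -/
def wpow (v : Word) (k : ℕ) : Word := (List.replicate k v).flatten

/-- `w ∈ W†_G`: a nice word that is indecomposable, i.e. not of the form `v^k`
for a nice word `v` and `k > 1`. -/
def Indecomposable (G : Subgroup Perm') (w : Word) : Prop :=
  IsNice G w ∧ ¬∃ v : Word, IsNice G v ∧ ∃ k : ℕ, 1 < k ∧ w = wpow v k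

/-- The inverse of a letter. -/
def letterInv : Letter → Letter
  | Sum.inl g => Sum.inl g⁻¹
  | Sum.inr b => Sum.inr (!b)

/-- The inverse of a word. -/
def wordInv (w : Word) : Word := (w.map letterInv).reverse

/-- `E` is closed under cyclic permutations and inverses thereof within `W*_G`. -/
def CyclClosed (G : Subgroup Perm') (E : Set Word) : Prop :=
  ∀ w ∈ E, ∀ w₀ w₁ : Word, w = w₀ ++ w₁ →
    (IsNice G (w₁ ++ w₀) → w₁ ++ w₀ ∈ E) ∧
    (IsNice G (wordInv (w₁ ++ w₀)) → wordInv (w₁ ++ w₀) ∈ E)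

/-- `(s, E)` is a condition of `Z†_G(r)`: a Zhang condition such that `E` is
closed under cyclic permutations and inverses thereof in `W*_G`, and whenever
`w = v^k ∈ E` with `v ∈ W†_G` then `v^l ∈ E` for all `0 < l ≤ k` and `o†_{v[s]}`
codes `r` up to `n` for every `n` with `p_n ≤ k`. -/
def ZdagCond (G : Subgroup Perm') (r : ℕ → Fin 2)
    (s : Set (ℕ × ℕ)) (E : Set Word) : Prop :=
  ZCond G s E ∧ CyclClosed G E ∧
  ∀ w ∈ E, ∀ v : Word, ∀ k : ℕ, Indecomposable G v → w = wpow v k →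
    (∀ l : ℕ, 0 < l → l ≤ k → wpow v l ∈ E) ∧
    (∀ n : ℕ, pPrime n ≤ k → ∀ i ≤ n, odag (wordRel s v) i = (r i : ℕ))

/-- Substituting the permutation `f` for `x` in a letter. -/
def letterPerm (f : Perm') : Letter → Perm'
  | Sum.inl g => g
  | Sum.inr true => f
  | Sum.inr false => f⁻¹

/-- `w[f]`: evaluation of a word at the permutation `f`. -/
def wordPerm (f : Perm') (w : Word) : Perm' := (w.map (letterPerm f)).prod

/-- Two functions are eventually different. -/
def EvDiff (f g : ℕ → ℕ) : Prop := {k : ℕ | f k = g k}.Finite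

/-- A set of permutations is an eventually different family. -/
def EDFamily (P : Set Perm') : Prop :=
  ∀ f ∈ P, ∀ g ∈ P, f ≠ g → EvDiff f g


/-! ### Auxiliary development for statement13 -/

/-- Partial injective relation. -/
def Pinj (R : ℕ → ℕ → Prop) : Prop :=
  (∀ ⦃a b c⦄, R a b → R a c → b = c) ∧ (∀ ⦃a b c⦄, R a c → R b c → a = b)

/-- Iteration of a relation. -/
def rIter (R : ℕ → ℕ → Prop) : ℕ → ℕ → ℕ → Prop
  | 0 => fun a b => a = b
  | n+1 => fun a b => ∃ c, rIter R n a c ∧ R c b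

lemma rIter_one (R : ℕ → ℕ → Prop) (a b : ℕ) : rIter R 1 a b ↔ R a b := by
  simp [rIter]

lemma rIter_add (R : ℕ → ℕ → Prop) (m n : ℕ) (a b : ℕ) :
    rIter R (m + n) a b ↔ ∃ c, rIter R m a c ∧ rIter R n c b := by
  induction n generalizing b with
  | zero => simp [rIter]
  | succ n ih =>
    constructor
    · rintro ⟨c, hc, hcb⟩
      obtain ⟨d, hd, hdc⟩ := (ih c).1 hc
      exact ⟨d, hd, c, hdc, hcb⟩
    · rintro ⟨d, hd, c, hdc, hcb⟩
      exact ⟨c, (ih c).2 ⟨d, hd, hdc⟩, hcb⟩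

lemma rIter_fun {R : ℕ → ℕ → Prop} (hR : Pinj R) (m : ℕ) :
    ∀ a b c, rIter R m a b → rIter R m a c → b = c := by
  induction m with
  | zero => intro a b c hb hc; exact hb.symm.trans hc
  | succ m ih =>
    rintro a b c ⟨d, hd, hdb⟩ ⟨e, he, hec⟩
    obtain rfl := ih a d e hd he
    exact hR.1 hdb hec

lemma rIter_inj {R : ℕ → ℕ → Prop} (hR : Pinj R) (m : ℕ) :
    ∀ a b c, rIter R m a c → rIter R m b c → a = b := by
  induction m with
  | zero => intro a b c hb hc; exact hb.trans hc.symm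
  | succ m ih =>
    rintro a b c ⟨d, hd, hdc⟩ ⟨e, he, hec⟩
    obtain rfl := hR.2 hdc hec
    exact ih a b d hd he

lemma rIter_sub {R : ℕ → ℕ → Prop} (hR : Pinj R) {m n : ℕ} {a : ℕ}
    (h : rIter R (m + n) a a) (hm : rIter R m a a) : rIter R n a a := by
  obtain ⟨c, hc, hca⟩ := (rIter_add R m n a a).1 h
  obtain rfl := rIter_fun hR m a a c hm hc
  exact hca

lemma rIter_mul {R : ℕ → ℕ → Prop} {m : ℕ} {a : ℕ} (h : rIter R m a a) :
    ∀ q, rIter R (m * q) a a := by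
  intro q
  induction q with
  | zero => simp [rIter]
  | succ q ih =>
    have : rIter R (m * q + m) a a := (rIter_add R (m * q) m a a).2 ⟨a, ih, h⟩
    simpa [Nat.mul_succ] using this

lemma mem_relOrbit_self (R : ℕ → ℕ → Prop) (n : ℕ) : n ∈ relOrbit R n := by
  intro O hO; exact hO.1

lemma relOrbit_closed (R : ℕ → ℕ → Prop) (n : ℕ) : RelClosed R (relOrbit R n) := by
  intro a b hab
  simp only [relOrbit, Set.mem_sInter]
  exact ⟨fun h O hO => (hO.2 a b hab).1 (h O hO), fun h O hO => (hO.2 a b hab).2 (h O hO)⟩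

lemma relOrbit_subset {R : ℕ → ℕ → Prop} {n : ℕ} {O : Set ℕ} (h : n ∈ O)
    (hO : RelClosed R O) : relOrbit R n ⊆ O :=
  Set.sInter_subset_of_mem ⟨h, hO⟩

lemma relOrbit_eq_of_rel {R : ℕ → ℕ → Prop} {b c : ℕ} (h : R b c) :
    relOrbit R b = relOrbit R c := by
  have hset : {O : Set ℕ | b ∈ O ∧ RelClosed R O} = {O : Set ℕ | c ∈ O ∧ RelClosed R O} :=
    Set.ext fun O => ⟨fun ⟨h1, h2⟩ => ⟨(h2 b c h).1 h1, h2⟩, fun ⟨h1, h2⟩ => ⟨(h2 b c h).2 h1, h2⟩⟩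
  unfold relOrbit
  rw [hset]

lemma mem_relOrbit_symm {R : ℕ → ℕ → Prop} {a n : ℕ} (h : a ∈ relOrbit R n) :
    n ∈ relOrbit R a := by
  have hcl : RelClosed R {b | n ∈ relOrbit R b} := by
    intro b c hbc
    simp only [Set.mem_setOf_eq, relOrbit_eq_of_rel hbc]
  exact relOrbit_subset (show n ∈ {b | n ∈ relOrbit R b} from mem_relOrbit_self R n) hcl h

lemma relOrbit_eq_of_mem {R : ℕ → ℕ → Prop} {a n : ℕ} (h : a ∈ relOrbit R n) :
    relOrbit R a = relOrbit R n :=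
  subset_antisymm (relOrbit_subset h (relOrbit_closed R n))
    (relOrbit_subset (mem_relOrbit_symm h) (relOrbit_closed R a))

lemma singleton_relClosed {R : ℕ → ℕ → Prop} (hR : Pinj R) {b : ℕ} (hb : R b b) :
    RelClosed R {b} := by
  intro e e' hee'
  simp only [Set.mem_singleton_iff]
  constructor
  · rintro rfl; exact hR.1 hee' hb
  · rintro rfl; exact hR.2 hee' hb

/-- The main cycle-structure lemma. -/
lemma cycle_lemma {R : ℕ → ℕ → Prop} (hR : Pinj R) {a : ℕ} {d : ℕ} (hdpos : 0 < d)
    (hd : rIter R d a a) (hmin : ∀ m, 0 < m → m < d → ¬ rIter R m a a) :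
    (relOrbit R a).ncard = d ∧ relOrbit R a ∈ relClosedOrbits R ∧
    (∀ b ∈ relOrbit R a, rIter R d b b) := by
  set C : Set ℕ := {e | ∃ m, m < d ∧ rIter R m a e} with hC
  have hCa : a ∈ C := ⟨0, hdpos, rfl⟩
  have hCcl : RelClosed R C := by
    intro e e' hee'
    constructor
    · rintro ⟨m, hm, hme⟩
      by_cases hlt : m + 1 < d
      · exact ⟨m + 1, hlt, e, hme, hee'⟩
      · have hmd : m + 1 = d := by omega
        have : rIter R d a e' := hmd ▸ ⟨e, hme, hee'⟩
        have he'a : e' = a := (rIter_fun hR d a a e' hd this).symm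
        exact he'a ▸ hCa
    · rintro ⟨m, hm, hme'⟩
      match m, hme' with
      | 0, hme' =>
        -- e' = a
        have he'a : a = e' := hme'
        subst he'a
        have hd' : rIter R ((d - 1) + 1) a a := by rwa [Nat.sub_add_cancel hdpos]
        obtain ⟨c, hc, hca⟩ := hd'
        obtain rfl := hR.2 hee' hca
        exact ⟨d - 1, by omega, hc⟩
      | (m' + 1), hme' =>
        obtain ⟨c, hc, hce'⟩ := hme'
        obtain rfl := hR.2 hee' hce'
        exact ⟨m', by omega, hc⟩
  have hsubC : ∀ m e, rIter R m a e → e ∈ relOrbit R a := by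
    intro m
    induction m with
    | zero => rintro e rfl; exact mem_relOrbit_self R a
    | succ m ih =>
      rintro e ⟨c, hc, hce⟩
      exact (relOrbit_closed R a c e hce).1 (ih c hc)
  have hOC : relOrbit R a = C :=
    subset_antisymm (relOrbit_subset hCa hCcl)
      (fun e he => by obtain ⟨m, _, hm⟩ := he; exact hsubC m e hm)
  have hper : ∀ b ∈ C, rIter R d b b := by
    rintro b ⟨m, hm, hmb⟩
    have hd2 : rIter R (m + (d - m)) a a := by rwa [Nat.add_sub_cancel' hm.le]
    obtain ⟨c, hc, hca⟩ := (rIter_add R m (d - m) a a).1 hd2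
    have hcb : c = b := rIter_fun hR m a c b hc hmb
    subst hcb
    have h5 : rIter R ((d - m) + m) c c := (rIter_add R (d - m) m c c).2 ⟨a, hca, hmb⟩
    rwa [Nat.sub_add_cancel hm.le] at h5
  have hdomran : C ⊆ relDom R ∩ relRan R := by
    intro b hb
    have h1 := hper b hb
    have h2 : rIter R (1 + (d - 1)) b b := by rwa [show 1 + (d - 1) = d by omega]
    obtain ⟨c, hc, _⟩ := (rIter_add R 1 (d - 1) b b).1 h2
    have hbc : R b c := (rIter_one R b c).1 hc
    have h3 : rIter R ((d - 1) + 1) b b := by rwa [Nat.sub_add_cancel hdpos]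
    obtain ⟨c', _, hc'b⟩ := h3
    exact ⟨⟨c, hbc⟩, ⟨c', hc'b⟩⟩
  have hex : ∀ m : ℕ, m < d → ∃ e, rIter R m a e := by
    intro m hm
    have hd2 : rIter R (m + (d - m)) a a := by rwa [Nat.add_sub_cancel' hm.le]
    obtain ⟨c, hc, _⟩ := (rIter_add R m (d - m) a a).1 hd2
    exact ⟨c, hc⟩
  have hcard : C.ncard = d := by
    classical
    set f : Fin d → ℕ := fun j => (hex j j.2).choose with hf
    have hfspec : ∀ j : Fin d, rIter R j a (f j) := fun j => (hex j j.2).choose_spec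
    have key : ∀ i j : Fin d, (i : ℕ) < (j : ℕ) → f i ≠ f j := by
      intro i j hij heq
      have h1 : rIter R i a (f i) := hfspec i
      have h2 : rIter R j a (f i) := heq ▸ hfspec j
      -- rIter (d - i) (f i) a
      have hd2 : rIter R ((i : ℕ) + (d - i)) a a := by
        rwa [Nat.add_sub_cancel' i.2.le]
      obtain ⟨c, hc, hca⟩ := (rIter_add R i (d - i) a a).1 hd2
      obtain rfl := rIter_fun hR i a c (f i) hc h1
      have h4 : rIter R ((j : ℕ) + (d - i)) a a := (rIter_add R j (d - i) a a).2 ⟨f i, h2, hca⟩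
      have h5 : rIter R (d + ((j : ℕ) - i)) a a := by
        rwa [show (j : ℕ) + (d - i) = d + ((j : ℕ) - i) by omega] at h4
      have h6 : rIter R ((j : ℕ) - i) a a := rIter_sub hR h5 hd
      exact hmin _ (by omega) (by omega) h6
    have hinj : Function.Injective f := by
      intro i j hij
      rcases lt_trichotomy (i : ℕ) (j : ℕ) with h | h | h
      · exact absurd hij (key i j h)
      · exact Fin.ext h
      · exact absurd hij.symm (key j i h)
    have hCrange : C = Set.range f := by
      ext e
      constructor
      · rintro ⟨m, hm, hme⟩
        refine ⟨⟨m, hm⟩, ?_⟩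
        exact (rIter_fun hR m a _ e (hfspec ⟨m, hm⟩) hme)
      · rintro ⟨j, rfl⟩
        exact ⟨j, j.2, hfspec j⟩
    rw [hCrange, ← Set.image_univ, Set.ncard_image_of_injective _ hinj, Set.ncard_univ,
      Nat.card_eq_fintype_card, Fintype.card_fin]
  refine ⟨by rw [hOC]; exact hcard, ⟨⟨a, rfl⟩, by rw [hOC]; exact hdomran⟩, ?_⟩
  intro b hb
  exact hper b (hOC ▸ hb)

lemma min_period {R : ℕ → ℕ → Prop} {c d' : ℕ} (hd' : rIter R d' c c) (hpos : 0 < d') :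
    ∃ d, 0 < d ∧ rIter R d c c ∧ ∀ m, 0 < m → m < d → ¬ rIter R m c c := by
  classical
  have hne : ∃ m, 0 < m ∧ rIter R m c c := ⟨d', hpos, hd'⟩
  refine ⟨Nat.find hne, (Nat.find_spec hne).1, (Nat.find_spec hne).2, ?_⟩
  intro m hm hlt hiter
  exact Nat.find_min hne hlt ⟨hm, hiter⟩

lemma orbit_of_fix {R : ℕ → ℕ → Prop} (hR : Pinj R) {p : ℕ} (hp : p.Prime) {a : ℕ}
    (ha : rIter R p a a) (hna : ¬ R a a) :
    relOrbit R a ∈ relClosedOrbits R ∧ (relOrbit R a).ncard = p := by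
  obtain ⟨d, hdpos, hdit, hdmin⟩ := min_period ha hp.pos
  have hdvd : d ∣ p := by
    have h1 : rIter R (d * (p / d)) a a := rIter_mul hdit (p / d)
    have h2 : rIter R (d * (p / d) + p % d) a a := by rwa [Nat.div_add_mod p d]
    have h3 : rIter R (p % d) a a := rIter_sub hR h2 h1
    by_contra hnd
    have hpos : 0 < p % d := Nat.pos_of_ne_zero (fun h => hnd (Nat.dvd_of_mod_eq_zero h))
    exact hdmin _ hpos (Nat.mod_lt p hdpos) h3
  rcases (Nat.Prime.eq_one_or_self_of_dvd hp d hdvd) with h1 | hdp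
  · exact absurd ((rIter_one R a a).1 (h1 ▸ hdit)) hna
  · subst hdp
    obtain ⟨hcard, hmem, _⟩ := cycle_lemma hR hdpos hdit hdmin
    exact ⟨hmem, hcard⟩

open Classical in
noncomputable def relStep (R : ℕ → ℕ → Prop) (x : ℕ) : ℕ :=
  if h : ∃ c, R x c then h.choose else 0

lemma relStep_spec {R : ℕ → ℕ → Prop} {x : ℕ} (h : ∃ c, R x c) : R x (relStep R x) := by
  unfold relStep
  rw [dif_pos h]
  exact h.choose_spec

/-- Trajectory of a point under a relation (by choice). -/
noncomputable def traj (R : ℕ → ℕ → Prop) (a : ℕ) : ℕ → ℕ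
  | 0 => a
  | n+1 => relStep R (traj R a n)

lemma fix_of_orbit {R : ℕ → ℕ → Prop} (hR : Pinj R) {p : ℕ} (hp : p.Prime) {O : Set ℕ}
    (hO : O ∈ relClosedOrbits R) (hcard : O.ncard = p) :
    ∀ b ∈ O, rIter R p b b ∧ ¬ R b b := by
  classical
  have hOfin : O.Finite := Set.finite_of_ncard_ne_zero (by rw [hcard]; exact hp.pos.ne')
  obtain ⟨n₀, hOn₀⟩ := hO.1
  have hOcl : RelClosed R O := hOn₀ ▸ relOrbit_closed R n₀
  have ha₀ : n₀ ∈ O := hOn₀ ▸ mem_relOrbit_self R n₀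
  -- trajectory stays in O
  have htraj : ∀ n, traj R n₀ n ∈ O ∧ rIter R n n₀ (traj R n₀ n) := by
    intro n
    induction n with
    | zero => exact ⟨ha₀, rfl⟩
    | succ n ih =>
      obtain ⟨hmem, hit⟩ := ih
      have hdom : ∃ c, R (traj R n₀ n) c := (hO.2 hmem).1
      have hrel : R (traj R n₀ n) (traj R n₀ (n + 1)) := relStep_spec hdom
      exact ⟨(hOcl _ _ hrel).1 hmem, ⟨traj R n₀ n, hit, hrel⟩⟩
  -- pigeonhole
  have hmaps : ∀ m ∈ Finset.range (p + 1), traj R n₀ m ∈ hOfin.toFinset := by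
    intro m _; exact hOfin.mem_toFinset.2 (htraj m).1
  have hcardlt : hOfin.toFinset.card < (Finset.range (p + 1)).card := by
    rw [Finset.card_range, ← Set.ncard_eq_toFinset_card _ hOfin, hcard]
    omega
  obtain ⟨i, _, j, _, hij, heq⟩ :=
    Finset.exists_ne_map_eq_of_card_lt_of_maps_to hcardlt hmaps
  -- wlog i < j
  have hkey : ∀ i j : ℕ, i < j → traj R n₀ i = traj R n₀ j →
      ∃ d', 0 < d' ∧ rIter R d' (traj R n₀ i) (traj R n₀ i) := by
    intro i j hlt he
    have h1 : rIter R i n₀ (traj R n₀ i) := (htraj i).2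
    have h2 : rIter R j n₀ (traj R n₀ i) := he ▸ (htraj j).2
    have h3 : rIter R (i + (j - i)) n₀ (traj R n₀ i) := by
      rwa [Nat.add_sub_cancel' hlt.le]
    obtain ⟨c, hc, hci⟩ := (rIter_add R i (j - i) n₀ (traj R n₀ i)).1 h3
    obtain rfl := rIter_fun hR i n₀ c (traj R n₀ i) hc h1
    exact ⟨j - i, by omega, hci⟩
  have hcyc : ∃ c ∈ O, ∃ d', 0 < d' ∧ rIter R d' c c := by
    rcases lt_or_gt_of_ne hij with h | h
    · obtain ⟨d', hd⟩ := hkey i j h heq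
      exact ⟨traj R n₀ i, (htraj i).1, d', hd⟩
    · obtain ⟨d', hd⟩ := hkey j i h heq.symm
      exact ⟨traj R n₀ j, (htraj j).1, d', hd⟩
  obtain ⟨c, hcO, d', hd'pos, hd'⟩ := hcyc
  obtain ⟨d, hdpos, hdit, hdmin⟩ := min_period hd' hd'pos
  obtain ⟨hcardd, _, hperd⟩ := cycle_lemma hR hdpos hdit hdmin
  have hOc : relOrbit R c = O := by
    rw [hOn₀]; exact relOrbit_eq_of_mem (hOn₀ ▸ hcO)
  have hdp : d = p := by rw [hOc, hcard] at hcardd; omega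
  subst hdp
  intro b hb
  have hbO : b ∈ relOrbit R c := by rw [hOc]; exact hb
  refine ⟨hperd b hbO, ?_⟩
  intro hbb
  have hObs : relOrbit R b = O := (relOrbit_eq_of_mem hbO).trans hOc
  have hsub : O ⊆ {b} := by
    rw [← hObs]
    exact relOrbit_subset rfl (singleton_relClosed hR hbb)
  have hOb : O = {b} := subset_antisymm hsub (Set.singleton_subset_iff.2 hb)
  rw [hOb, Set.ncard_singleton] at hcard
  exact absurd hcard.symm hp.one_lt.ne'

lemma partition_ncard {p : ℕ} (hp : 0 < p) (𝒪 : Set (Set ℕ)) (hfin : 𝒪.Finite) :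
    𝒪.PairwiseDisjoint id → (∀ O ∈ 𝒪, O.ncard = p) → (⋃₀ 𝒪).ncard = 𝒪.ncard * p := by
  refine Set.Finite.induction_on 𝒪 hfin ?_ ?_
  · intro _ _; simp
  · intro O 𝒪' hO hfin' ih hdisj hcards
    have hOcard : O.ncard = p := hcards O (Set.mem_insert _ _)
    have hOfin : O.Finite := Set.finite_of_ncard_ne_zero (by omega)
    have hUfin : (⋃₀ 𝒪').Finite := hfin'.sUnion fun U hU =>
      Set.finite_of_ncard_ne_zero (by rw [hcards U (Set.mem_insert_of_mem _ hU)]; omega)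
    have hd : Disjoint O (⋃₀ 𝒪') := Set.disjoint_sUnion_right.2 fun U hU =>
      hdisj (Set.mem_insert _ _) (Set.mem_insert_of_mem _ hU) (by rintro rfl; exact hO hU)
    rw [Set.sUnion_insert, Set.ncard_union_eq hd hOfin hUfin,
      ih (hdisj.subset (Set.subset_insert _ _)) (fun U hU => hcards U (Set.mem_insert_of_mem _ hU)),
      Set.ncard_insert_of_notMem hO hfin', hOcard]
    ring

lemma closed_orbit_count {R S : ℕ → ℕ → Prop} (hR : Pinj R) (hS : Pinj S)
    {p : ℕ} (hp : p.Prime) (hfin : {a | rIter R p a a}.Finite)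
    (h1 : ∀ a, R a a ↔ S a a) (hp' : ∀ a, rIter R p a a ↔ rIter S p a a) :
    {O | O ∈ relClosedOrbits R ∧ O.ncard = p}.ncard =
    {O | O ∈ relClosedOrbits S ∧ O.ncard = p}.ncard := by
  set U : Set ℕ := {a | rIter R p a a ∧ ¬ R a a} with hU
  have hUfin : U.Finite := hfin.subset fun a ha => ha.1
  have side : ∀ (T : ℕ → ℕ → Prop), Pinj T →
      (∀ a, (rIter T p a a ∧ ¬ T a a) ↔ a ∈ U) →
      {O | O ∈ relClosedOrbits T ∧ O.ncard = p}.ncard * p = U.ncard := by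
    intro T hT hUT
    set 𝒪 : Set (Set ℕ) := {O | O ∈ relClosedOrbits T ∧ O.ncard = p} with h𝒪
    have hcov : ⋃₀ 𝒪 = U := by
      ext b
      constructor
      · rintro ⟨O, ⟨hO, hcard⟩, hb⟩
        exact (hUT b).1 (fix_of_orbit hT hp hO hcard b hb)
      · intro hb
        obtain ⟨hb1, hb2⟩ := (hUT b).2 hb
        obtain ⟨hmem, hcard⟩ := orbit_of_fix hT hp hb1 hb2
        exact ⟨relOrbit T b, ⟨hmem, hcard⟩, mem_relOrbit_self T b⟩
    have hdisj : 𝒪.PairwiseDisjoint id := by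
      intro O₁ hO₁ O₂ hO₂ hne
      rw [Function.onFun_apply, Set.disjoint_left]
      intro b hb1 hb2
      obtain ⟨m₁, e₁⟩ := hO₁.1.1
      obtain ⟨m₂, e₂⟩ := hO₂.1.1
      refine hne ?_
      have hb1' : b ∈ relOrbit T m₁ := by rw [← e₁]; exact hb1
      have hb2' : b ∈ relOrbit T m₂ := by rw [← e₂]; exact hb2
      have h₁ : O₁ = relOrbit T b := e₁.trans (relOrbit_eq_of_mem hb1').symm
      have h₂ : O₂ = relOrbit T b := e₂.trans (relOrbit_eq_of_mem hb2').symm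
      rw [h₁, h₂]
    have h𝒪fin : 𝒪.Finite := hUfin.finite_subsets.subset fun O hO => by
      show O ⊆ U
      intro b hb
      rw [← hcov]
      exact ⟨O, hO, hb⟩
    have := partition_ncard hp.pos 𝒪 h𝒪fin hdisj fun O hO => hO.2
    rw [hcov] at this
    exact this.symm
  have e1 := side R hR fun a => Iff.rfl
  have e2 := side S hS fun a => by
    show _ ↔ rIter R p a a ∧ ¬ R a a
    rw [hp' a, h1 a]
  exact Nat.eq_of_mul_eq_mul_right hp.pos (e1.trans e2.symm)

/-! ### Word-level lemmas -/

lemma pinj_letterRel {s : Set (ℕ × ℕ)} (hs : PartInj s) (l : Letter) :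
    Pinj (letterRel s l) := by
  rcases l with g | b
  · exact ⟨fun a b c h1 h2 => h1.symm.trans h2,
      fun a b c h1 h2 => g.injective (h1.trans h2.symm)⟩
  · cases b
    · exact ⟨fun a b c h1 h2 => hs.2 h1 h2, fun a b c h1 h2 => hs.1 h1 h2⟩
    · exact ⟨fun a b c h1 h2 => hs.1 h1 h2, fun a b c h1 h2 => hs.2 h1 h2⟩

lemma pinj_wordRel {s : Set (ℕ × ℕ)} (hs : PartInj s) (w : Word) :
    Pinj (wordRel s w) := by
  induction w with
  | nil => exact ⟨fun a b c h1 h2 => h1.symm.trans h2, fun a b c h1 h2 => h1.trans h2.symm⟩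
  | cons l w ih =>
    constructor
    · rintro a b c ⟨d, hd, hdb⟩ ⟨e, he, hec⟩
      obtain rfl := ih.1 hd he
      exact (pinj_letterRel hs l).1 hdb hec
    · rintro a b c ⟨d, hd, hdc⟩ ⟨e, he, hec⟩
      obtain rfl := (pinj_letterRel hs l).2 hdc hec
      exact ih.2 hd he

lemma wordRel_append (s : Set (ℕ × ℕ)) (u w : Word) (a b : ℕ) :
    wordRel s (u ++ w) a b ↔ ∃ c, wordRel s w a c ∧ wordRel s u c b := by
  induction u generalizing b with
  | nil => simp [wordRel]
  | cons l u ih =>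
    show (∃ c, wordRel s (u ++ w) a c ∧ letterRel s l c b) ↔ _
    constructor
    · rintro ⟨c, hc, hcb⟩
      obtain ⟨d, hd, hdc⟩ := (ih c).1 hc
      exact ⟨d, hd, c, hdc, hcb⟩
    · rintro ⟨d, hd, c, hdc, hcb⟩
      exact ⟨c, (ih c).2 ⟨d, hd, hdc⟩, hcb⟩

lemma wordRel_wpow (s : Set (ℕ × ℕ)) (v : Word) (m : ℕ) (a b : ℕ) :
    wordRel s (wpow v m) a b ↔ rIter (wordRel s v) m a b := by
  induction m generalizing b with
  | zero => simp [wpow, wordRel, rIter]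
  | succ m ih =>
    have : wpow v (m + 1) = v ++ wpow v m := by
      simp [wpow, List.replicate_succ]
    rw [this, wordRel_append]
    constructor
    · rintro ⟨c, hc, hcb⟩
      exact ⟨c, (ih c).1 hc, hcb⟩
    · rintro ⟨c, hc, hcb⟩
      exact ⟨c, (ih c).2 hc, hcb⟩

lemma dom_of_getLast {s : Set (ℕ × ℕ)} :
    ∀ w : Word, w.getLast? = some (Sum.inr true) → ∀ a b, wordRel s w a b → a ∈ pdom s := by
  intro w
  induction w with
  | nil => simp
  | cons l w ih =>
    intro hlast a b hab
    obtain ⟨c, hc, hlc⟩ := hab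
    cases w with
    | nil =>
      simp only [List.getLast?_singleton, Option.some.injEq] at hlast
      subst hlast
      have hac : a = c := hc
      subst hac
      exact ⟨(a, b), hlc, rfl⟩
    | cons l' w' =>
      exact ih (by rw [← hlast, List.getLast?_cons_cons]) a c hc

lemma getLast?_xpow {k : ℤ} (hk : 0 < k) : (xpow k).getLast? = some (Sum.inr true) := by
  unfold xpow
  rw [if_pos hk.le]
  have h0 : 0 < k.toNat := by omega
  obtain ⟨m, hm⟩ : ∃ m, k.toNat = m + 1 := ⟨k.toNat - 1, by omega⟩
  rw [hm, List.replicate_succ', List.getLast?_concat]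

lemma getLast?_blockWord {pr : Perm' × ℤ} (hpr : 0 < pr.2) :
    (blockWord pr).getLast? = some (Sum.inr true) := by
  have hx := getLast?_xpow hpr
  have hne : xpow pr.2 ≠ [] := by
    intro h; rw [h] at hx; simp at hx
  show (([Sum.inl pr.1] : Word) ++ xpow pr.2).getLast? = _
  rw [List.getLast?_append_of_ne_nil _ hne, hx]

lemma getLast?_flatten_blocks :
    ∀ (bs : List (Perm' × ℤ)) (pr : Perm' × ℤ), bs.getLast? = some pr →
      ((bs.map blockWord).flatten).getLast? = (blockWord pr).getLast? := by
  intro bs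
  induction bs with
  | nil => simp
  | cons b bs ih =>
    intro pr hpr
    cases bs with
    | nil =>
      simp only [List.getLast?_singleton, Option.some.injEq] at hpr
      subst hpr
      simp [List.flatten]
    | cons b' bs' =>
      rw [List.getLast?_cons_cons] at hpr
      have hrest := ih pr hpr
      have hne : (((b' :: bs').map blockWord).flatten) ≠ [] := by
        intro h
        rw [h] at hrest
        have : (blockWord pr).getLast? = none := hrest.symm
        simp [blockWord] at this
      show ((blockWord b) ++ ((b' :: bs').map blockWord).flatten).getLast? = _
      rw [List.getLast?_append_of_ne_nil _ hne, hrest]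

lemma nice_getLast {G : Subgroup Perm'} {v : Word} (hv : IsNice G v) :
    v.getLast? = some (Sum.inr true) := by
  rcases hv with ⟨k, hk, rfl⟩ | ⟨bs, hne, hall, ⟨pr, hlast, hpr⟩, rfl⟩
  · exact getLast?_xpow (by exact_mod_cast hk)
  · rw [getLast?_flatten_blocks bs pr hlast]
    exact getLast?_blockWord hpr

lemma fix_iter_finite {t : Set (ℕ × ℕ)} (htfin : t.Finite) {G : Subgroup Perm'} {v : Word}
    (hv : IsNice G v) {p : ℕ} (hp : 0 < p) :
    {a | rIter (wordRel t v) p a a}.Finite := by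
  refine (htfin.image Prod.fst).subset ?_
  intro a ha
  have h2 : rIter (wordRel t v) (1 + (p - 1)) a a := by
    rwa [show 1 + (p - 1) = p by omega]
  obtain ⟨c, hc, _⟩ := (rIter_add (wordRel t v) 1 (p - 1) a a).1 h2
  have hac : wordRel t v a c := (rIter_one (wordRel t v) a c).1 hc
  exact dom_of_getLast v (nice_getLast hv) a c hac


/-- Every extension in `Z_G` of a condition of `Z†_G(r)` (with the same word
side) is itself a condition of `Z†_G(r)`. -/
theorem statement13 (G : Subgroup Perm') (hG : Cofinitary G) (r : ℕ → Fin 2)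
    (s : Set (ℕ × ℕ)) (E : Set Word) (hs : ZdagCond G r s E)
    (t : Set (ℕ × ℕ)) (ht : ZCond G t E) (hle : ZLe t E s E) :
    ZdagCond G r t E := by
  obtain ⟨hsZ, hsCyc, hsW⟩ := hs
  refine ⟨ht, hsCyc, ?_⟩
  intro w hw v k hv hwk
  obtain ⟨hmem, hcode⟩ := hsW w hw v k hv hwk
  refine ⟨hmem, ?_⟩
  intro n hn i hi
  have hp : (pPrime i).Prime := Nat.prime_nth_prime i
  have hple : pPrime i ≤ k :=
    le_trans (Nat.nth_monotone Nat.infinite_setOf_prime hi) hn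
  set p := pPrime i with hpdef
  have hvE : wpow v 1 ∈ E := hmem 1 Nat.one_pos (le_trans (le_trans hp.one_lt.le hple) le_rfl)
  have hvpE : wpow v p ∈ E := hmem p hp.pos hple
  have hfix1 := hle.2.2 _ hvE
  have hfixp := hle.2.2 _ hvpE
  have hR : Pinj (wordRel t v) := pinj_wordRel ht.2.1 v
  have hS : Pinj (wordRel s v) := pinj_wordRel hsZ.2.1 v
  have h1 : ∀ a, wordRel t v a a ↔ wordRel s v a a := by
    intro a
    rw [← rIter_one (wordRel t v), ← rIter_one (wordRel s v),
      ← wordRel_wpow, ← wordRel_wpow]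
    exact Set.ext_iff.1 hfix1 a
  have hpiter : ∀ a, rIter (wordRel t v) p a a ↔ rIter (wordRel s v) p a a := by
    intro a
    rw [← wordRel_wpow, ← wordRel_wpow]
    exact Set.ext_iff.1 hfixp a
  have hfin : {a | rIter (wordRel t v) p a a}.Finite :=
    fix_iter_finite ht.1 hv.1 hp.pos
  have hcount := closed_orbit_count hR hS hp hfin h1 hpiter
  show {O | O ∈ relClosedOrbits (wordRel t v) ∧ O.ncard = pPrime i}.ncard % 2 = (r i : ℕ)
  rw [hcount]
  exact hcode n hn i hi

end
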